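/- If the correlation property holds with parameter a ≠ 0 and slack ε, i.e., |u_i − a·v_i| ≤ ε for all i = 1,…,N (where u_i, v_i are probit-transformed ID and OOD accuracies), and the sample standard deviation σ_v of v is positive, then the sample Pearson correlation satisfies |corr(u, v)| ≥ 1 − 2ε·√N/(|a|·||v̄||), hence corr(u,v) → sign-definite as ε → 0 with σ_v bounded below. -/

import Mathlib

set_option maxHeartbeats 1000000


noncomputable def center {n : ℕ} (v : Fin n → ℝ) : Fin n → ℝ :=
  fun i => v i - (∑ j, v j) / n

noncomputable def vnorm {n : ℕ} (v : Fin n → ℝ) : ℝ :=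
  Real.sqrt (∑ i, (v i) ^ 2)

noncomputable def pcorr {n : ℕ} (x y : Fin n → ℝ) : ℝ :=
  (∑ i, center x i * center y i) / (vnorm (center x) * vnorm (center y))

lemma vnorm_nonneg {n : ℕ} (f : Fin n → ℝ) : 0 ≤ vnorm f := Real.sqrt_nonneg _

lemma vnorm_sq {n : ℕ} (f : Fin n → ℝ) : vnorm f ^ 2 = ∑ i, (f i) ^ 2 :=
  Real.sq_sqrt (Finset.sum_nonneg fun _ _ => sq_nonneg _)

lemma abs_sum_mul_le {n : ℕ} (f g : Fin n → ℝ) :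
    |∑ i, f i * g i| ≤ vnorm f * vnorm g := by
  have h1 := Real.sum_mul_le_sqrt_mul_sqrt Finset.univ f g
  have h2 := Real.sum_mul_le_sqrt_mul_sqrt Finset.univ (fun i => -f i) g
  have he : ∑ i, (-f i) * g i = -∑ i, f i * g i := by
    rw [← Finset.sum_neg_distrib]
    exact Finset.sum_congr rfl fun i _ => by ring
  have heq : Real.sqrt (∑ i, (-f i) ^ 2) = vnorm f := by
    simp [vnorm, neg_sq]
  rw [he, heq] at h2
  simp only [vnorm] at h1 h2 ⊢
  rw [abs_le]
  exact ⟨by linarith, h1⟩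

lemma sum_center_sq_le {n : ℕ} (e : Fin n → ℝ) :
    ∑ i, (center e i) ^ 2 ≤ ∑ i, (e i) ^ 2 := by
  rcases Nat.eq_zero_or_pos n with h | h
  · subst h; simp
  have hn : (n : ℝ) ≠ 0 := Nat.cast_ne_zero.mpr h.ne'
  set m := (∑ j, e j) / n with hm
  have hsum : ∑ j, e j = n * m := by rw [hm]; field_simp
  have key : ∑ i, (center e i) ^ 2 = (∑ i, (e i) ^ 2) - n * m ^ 2 := by
    calc ∑ i, (center e i) ^ 2 = ∑ i, ((e i) ^ 2 - 2 * m * e i + m ^ 2) := by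
          refine Finset.sum_congr rfl fun i _ => ?_
          simp only [center, ← hm]; ring
      _ = (∑ i, (e i) ^ 2) - 2 * m * (∑ i, e i) + n * m ^ 2 := by
          rw [Finset.sum_add_distrib, Finset.sum_sub_distrib, ← Finset.mul_sum]
          simp [Finset.sum_const, Finset.card_univ]
      _ = (∑ i, (e i) ^ 2) - n * m ^ 2 := by rw [hsum]; ring
  rw [key]
  have : 0 ≤ (n : ℝ) * m ^ 2 := mul_nonneg (Nat.cast_nonneg n) (sq_nonneg m)
  linarith

theorem correlation_property_implies_strong_correlation {N : ℕ}
    (u v : Fin N → ℝ) (a ε : ℝ) (ha : a ≠ 0)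
    (hprop : ∀ i, |u i - a * v i| ≤ ε)
    (hv : 0 < vnorm (center v)) :
    1 - 2 * ε * Real.sqrt N / (|a| * vnorm (center v)) ≤ |pcorr u v| := by
  classical
  have hN : 0 < N := by
    by_contra h
    have : N = 0 := by omega
    subst this
    simp [vnorm] at hv
  have hε : 0 ≤ ε := le_trans (abs_nonneg _) (hprop ⟨0, hN⟩)
  set V := center v with hV
  set W := center u with hW
  set E : Fin N → ℝ := fun i => u i - a * v i with hE
  set F := center E with hF
  have hWE : ∀ i, W i = a * V i + F i := by
    intro i
    simp only [hW, hV, hF, hE, center]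
    rw [Finset.sum_sub_distrib, ← Finset.mul_sum, sub_div, mul_div_assoc]
    ring
  set β := vnorm V with hβ
  set t := vnorm F with htdef
  set w := vnorm W with hwdef
  set S := ∑ i, W i * V i with hS
  have hβ2 : β ^ 2 = ∑ i, V i ^ 2 := vnorm_sq V
  have ht2 : t ^ 2 = ∑ i, F i ^ 2 := vnorm_sq F
  have hw2 : w ^ 2 = ∑ i, W i ^ 2 := vnorm_sq W
  have ht0 : 0 ≤ t := vnorm_nonneg F
  have hw0 : 0 ≤ w := vnorm_nonneg W
  have hFV : |∑ i, F i * V i| ≤ t * β := abs_sum_mul_le F V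
  have hWV : |S| ≤ w * β := abs_sum_mul_le W V
  have hSeq : S = a * β ^ 2 + ∑ i, F i * V i := by
    rw [hS, hβ2, Finset.mul_sum, ← Finset.sum_add_distrib]
    exact Finset.sum_congr rfl fun i _ => by rw [hWE i]; ring
  -- lower bound on |S|
  have hSlow : (|a| * β - t) * β ≤ |S| := by
    have h3 := abs_add_le S (-(∑ i, F i * V i))
    rw [abs_neg] at h3
    have h4 : S + -(∑ i, F i * V i) = a * β ^ 2 := by rw [hSeq]; ring
    rw [h4, abs_mul, abs_of_nonneg (sq_nonneg β)] at h3
    nlinarith [hFV]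
  -- upper bound on w
  have hwle : w ≤ |a| * β + t := by
    have hac : a * (∑ i, F i * V i) ≤ |a| * (t * β) :=
      calc a * (∑ i, F i * V i) ≤ |a * (∑ i, F i * V i)| := le_abs_self _
        _ = |a| * |∑ i, F i * V i| := abs_mul _ _
        _ ≤ |a| * (t * β) := mul_le_mul_of_nonneg_left hFV (abs_nonneg a)
    have hsq : w ^ 2 ≤ (|a| * β + t) ^ 2 := by
      rw [hw2]
      have hexp : ∑ i, W i ^ 2 = a ^ 2 * β ^ 2 + 2 * a * (∑ i, F i * V i) + t ^ 2 := by
        rw [hβ2, ht2, Finset.mul_sum, Finset.mul_sum, ← Finset.sum_add_distrib,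
          ← Finset.sum_add_distrib]
        exact Finset.sum_congr rfl fun i _ => by rw [hWE i]; ring
      rw [hexp]
      nlinarith [hac, sq_abs a]
    nlinarith [hsq, hw0, add_nonneg (mul_nonneg (abs_nonneg a) hv.le) ht0]
  -- bound on t
  have htε : t ≤ ε * Real.sqrt N := by
    have h1 : ∑ i, E i ^ 2 ≤ N * ε ^ 2 := by
      calc ∑ i, E i ^ 2 ≤ ∑ _i : Fin N, ε ^ 2 := by
            refine Finset.sum_le_sum fun i _ => ?_
            have := hprop i
            nlinarith [sq_abs (E i), abs_nonneg (E i)]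
        _ = N * ε ^ 2 := by simp [Finset.sum_const, Finset.card_univ]
    have h2 : t ^ 2 ≤ (ε * Real.sqrt N) ^ 2 := by
      rw [ht2, mul_pow, Real.sq_sqrt (Nat.cast_nonneg N)]
      exact le_trans (sum_center_sq_le E) (by linarith)
    nlinarith [mul_nonneg hε (Real.sqrt_nonneg (N : ℝ)), ht0]
  have hpcorr : |pcorr u v| = |S| / (w * β) := by
    rw [pcorr, abs_div, abs_of_nonneg (mul_nonneg hw0 hv.le)]
  rw [hpcorr]
  by_cases hc : 1 - 2 * ε * Real.sqrt N / (|a| * β) ≤ 0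
  · exact le_trans hc (div_nonneg (abs_nonneg _) (mul_nonneg hw0 hv.le))
  push_neg at hc
  set X := |a| * β with hX
  have hX0 : 0 < X := mul_pos (abs_pos.mpr ha) hv
  have hte : 2 * (ε * Real.sqrt N) < X := by
    have h5 : 2 * ε * Real.sqrt N / X < 1 := by linarith
    have := (div_lt_one hX0).mp h5
    linarith
  have htX : 2 * t < X := lt_of_le_of_lt (by linarith) hte
  have hw_pos : 0 < w := by
    rcases hw0.lt_or_eq with h | h
    · exact h
    · exfalso
      have hs0 : |S| ≤ 0 := by rw [← h] at hWV; simpa using hWV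
      nlinarith [hSlow, hv, htX, ht0]
  have he0 : 0 ≤ ε * Real.sqrt N := mul_nonneg hε (Real.sqrt_nonneg _)
  have hgoal : (X - 2 * (ε * Real.sqrt N)) * (w * β) ≤ |S| * X := by
    have A : (X - 2 * (ε * Real.sqrt N)) * w ≤ (X - 2 * (ε * Real.sqrt N)) * (X + t) :=
      mul_le_mul_of_nonneg_left hwle (by linarith)
    nlinarith [mul_le_mul_of_nonneg_right A hv.le,
      mul_le_mul_of_nonneg_right hSlow hX0.le,
      mul_nonneg (mul_nonneg (by linarith : (0:ℝ) ≤ ε * Real.sqrt N - t) hX0.le) hv.le,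
      mul_nonneg (mul_nonneg he0 ht0) hv.le]
  have hwβ : 0 < w * β := mul_pos hw_pos hv
  rw [le_div_iff₀ hwβ]
  have h9 : 1 - 2 * ε * Real.sqrt N / X = (X - 2 * (ε * Real.sqrt N)) / X := by
    field_simp
  rw [h9, div_mul_eq_mul_div, div_le_iff₀ hX0]
  exact hgoal
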